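/- The section functor Γ : MBB(X) → NMod_pr(X) is full: every module morphism Φ : Γ(T_1) → Γ(T_2) (L^0(m)-linear with |Φ(s)| ≤ |s| m-a.e.) is of the form Γ(φ) for some MBB morphism φ : T_1 → T_2. -/

import Mathlib

open MeasureTheory Filter

namespace L0SerreSwan

/-- A measurable Banach bundle over `(X,d,m)`: a Borel partition `(E_n)_{n∈ℕ}` of `X`,
with total space `⊔ₙ Eₙ × ℝⁿ`, together with a measurable function `nrm` assigning to
`m`-a.e. point `x ∈ E_n` a norm `nrm n x ·` on the fiber `ℝⁿ`. -/
structure MBB (X : Type*) [MeasurableSpace X] (μ : MeasureTheory.Measure X) where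
  E : ℕ → Set X
  measE : ∀ n, MeasurableSet (E n)
  disjE : ∀ n m, n ≠ m → Disjoint (E n) (E m)
  unionE : (⋃ n, E n) = Set.univ
  nrm : (n : ℕ) → X → (Fin n → ℝ) → ℝ
  meas_nrm : ∀ n, Measurable (fun p : X × (Fin n → ℝ) => nrm n p.1 p.2)
  nrm_nonneg : ∀ n, ∀ᵐ x ∂μ, x ∈ E n → ∀ v, 0 ≤ nrm n x v
  nrm_definite : ∀ n, ∀ᵐ x ∂μ, x ∈ E n → ∀ v, nrm n x v = 0 → v = 0
  nrm_smul : ∀ n, ∀ᵐ x ∂μ, x ∈ E n → ∀ (c : ℝ) (v), nrm n x (c • v) = |c| * nrm n x v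
  nrm_triangle : ∀ n, ∀ᵐ x ∂μ, x ∈ E n → ∀ v w, nrm n x (v + w) ≤ nrm n x v + nrm n x w

variable {X : Type*} [MeasurableSpace X] {μ : MeasureTheory.Measure X}

/-- A measurable section of a measurable Banach bundle, recorded by its values
`val n x ∈ ℝⁿ` (only the values for `x ∈ E_n` are relevant). -/
structure Sec (B : MBB X μ) where
  val : (n : ℕ) → X → Fin n → ℝ
  meas : ∀ n, Measurable (val n)

/-- Two sections agree `m`-a.e. (fiberwise, on each piece of the partition). -/
def Sec.aeeq (B : MBB X μ) (s t : Sec B) : Prop :=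
  ∀ n, ∀ᵐ x ∂μ, x ∈ B.E n → s.val n x = t.val n x

/-- Pointwise sum of sections. -/
def Sec.add {B : MBB X μ} (s t : Sec B) : Sec B :=
  ⟨fun n x i => s.val n x i + t.val n x i, fun n =>
    measurable_pi_lambda _ fun i =>
      ((measurable_pi_apply i).comp (s.meas n)).add
        ((measurable_pi_apply i).comp (t.meas n))⟩

/-- Pointwise difference of sections. -/
def Sec.sub {B : MBB X μ} (s t : Sec B) : Sec B :=
  ⟨fun n x i => s.val n x i - t.val n x i, fun n =>
    measurable_pi_lambda _ fun i =>
      ((measurable_pi_apply i).comp (s.meas n)).sub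
        ((measurable_pi_apply i).comp (t.meas n))⟩

/-- Multiplication of a section by a (Borel representative of an) `L⁰` function. -/
def Sec.smul {B : MBB X μ} (g : X → ℝ) (hg : Measurable g) (s : Sec B) : Sec B :=
  ⟨fun n x i => g x * s.val n x i, fun n =>
    measurable_pi_lambda _ fun i =>
      hg.mul ((measurable_pi_apply i).comp (s.meas n))⟩

/-- The pointwise norm `|s|(x) = nrm(s(x))` of a section. -/
noncomputable def ptNorm (B : MBB X μ) (s : Sec B) : X → ℝ :=
  fun x => ∑' n, (B.E n).indicator (fun y => B.nrm n y (s.val n y)) x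

/-- The distance `d(s,t) = ∫ |s-t| ∧ 1 dm'` on sections. -/
noncomputable def secDist (B : MBB X μ) (m' : MeasureTheory.Measure X) (s t : Sec B) : ℝ :=
  ∫ x, min (ptNorm B (s.sub t) x) 1 ∂m'

/-- The constant section associated to a vector `q ∈ ℝⁿ`: it equals `q` on `E_n` and
vanishes on the other pieces of the partition. -/
def constSec (B : MBB X μ) (n : ℕ) (q : Fin n → ℝ) : Sec B :=
  ⟨fun k _x i => if h : k = n then q (Fin.cast h i) else 0,
   fun _k => measurable_const⟩

/-- A finite `L⁰`-linear combination `∑ᵢ gᵢ • uᵢ` of sections. -/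
def lincomb {B : MBB X μ} {k : ℕ} (g : Fin k → X → ℝ) (hg : ∀ i, Measurable (g i))
    (u : Fin k → Sec B) : Sec B :=
  ⟨fun n x j => ∑ i, g i x * (u i).val n x j, fun n =>
    measurable_pi_lambda _ fun j =>
      Finset.measurable_sum _ fun i _ =>
        (hg i).mul ((measurable_pi_apply j).comp ((u i).meas n))⟩

/-- A (pre-)morphism of measurable Banach bundles: a measurable map over `X` which, for
`m`-a.e. `x ∈ E¹_n ∩ E²_m`, is linear and 1-Lipschitz from the fiber of `T₁` to the
fiber of `T₂` at `x`. -/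
structure MBBHom (B₁ B₂ : MBB X μ) where
  toFun : (n m : ℕ) → X → (Fin n → ℝ) → (Fin m → ℝ)
  meas : ∀ n m, Measurable (fun p : X × (Fin n → ℝ) => toFun n m p.1 p.2)
  ae_add : ∀ n m, ∀ᵐ x ∂μ, x ∈ B₁.E n ∩ B₂.E m →
    ∀ v w, toFun n m x (v + w) = toFun n m x v + toFun n m x w
  ae_smul : ∀ n m, ∀ᵐ x ∂μ, x ∈ B₁.E n ∩ B₂.E m →
    ∀ (c : ℝ) (v), toFun n m x (c • v) = c • toFun n m x v
  ae_lipschitz : ∀ n m, ∀ᵐ x ∂μ, x ∈ B₁.E n ∩ B₂.E m →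
    ∀ v, B₂.nrm m x (toFun n m x v) ≤ B₁.nrm n x v

/-- `t` represents the composition `φ ∘ s` (that is, `t` is a measurable section of `T₂`
which `m`-a.e. equals `φ` applied fiberwise to the section `s` of `T₁`). -/
def Represents {B₁ B₂ : MBB X μ} (φ : MBBHom B₁ B₂) (s : Sec B₁) (t : Sec B₂) : Prop :=
  ∀ n m, ∀ᵐ x ∂μ, x ∈ B₁.E n ∩ B₂.E m → t.val m x = φ.toFun n m x (s.val n x)

section AuxLemmas

variable {X : Type*} [MeasurableSpace X] {μ : MeasureTheory.Measure X}

lemma aeeq_of_ptwise {B : MBB X μ} {s t : Sec B}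
    (h : ∀ n x, s.val n x = t.val n x) : Sec.aeeq B s t :=
  fun n => Filter.Eventually.of_forall fun x _ => h n x

lemma aeeq_trans {B : MBB X μ} {s t u : Sec B}
    (h1 : Sec.aeeq B s t) (h2 : Sec.aeeq B t u) : Sec.aeeq B s u := fun n => by
  filter_upwards [h1 n, h2 n] with x hx1 hx2 hm
  rw [hx1 hm, hx2 hm]

lemma aeeq_symm {B : MBB X μ} {s t : Sec B} (h : Sec.aeeq B s t) : Sec.aeeq B t s :=
  fun n => by filter_upwards [h n] with x hx hm; rw [hx hm]

lemma aeeq_add_congr {B : MBB X μ} {s s' t t' : Sec B}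
    (h1 : Sec.aeeq B s s') (h2 : Sec.aeeq B t t') :
    Sec.aeeq B (s.add t) (s'.add t') := fun n => by
  filter_upwards [h1 n, h2 n] with x hx1 hx2 hm
  funext i
  simp only [Sec.add, hx1 hm, hx2 hm]

lemma ptNorm_eq (B : MBB X μ) {m : ℕ} {x : X} (hx : x ∈ B.E m) (t : Sec B) :
    ptNorm B t x = B.nrm m x (t.val m x) := by
  unfold ptNorm
  rw [tsum_eq_single m]
  · rw [Set.indicator_of_mem hx]
  · intro k hk
    refine Set.indicator_of_notMem (fun hxk => ?_) _
    exact Set.disjoint_left.mp (B.disjE k m hk) hxk hx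

lemma key {n : ℕ} (f g : (Fin n → ℝ) → ℝ)
    (hfa : ∀ v w, f (v + w) ≤ f v + f w)
    (hfs : ∀ (c : ℝ) v, f (c • v) = |c| * f v)
    (hga : ∀ v w, g (v + w) ≤ g v + g w)
    (hgs : ∀ (c : ℝ) v, g (c • v) = |c| * g v)
    (hfg : ∀ q : Fin n → ℚ, f (fun i => (q i : ℝ)) ≤ g (fun i => (q i : ℝ)))
    (v : Fin n → ℝ) : f v ≤ g v := by
  classical
  have hnn : ∀ (F : (Fin n → ℝ) → ℝ), (∀ v w, F (v + w) ≤ F v + F w) →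
      (∀ (c : ℝ) v, F (c • v) = |c| * F v) → ∀ u, 0 ≤ F u := by
    intro F hFa hFs u
    have h1 := hFa u ((-1 : ℝ) • u)
    rw [hFs] at h1
    have h2 : u + (-1 : ℝ) • u = 0 := by simp
    have hF0 : F 0 = 0 := by simpa using hFs 0 0
    rw [h2, hF0] at h1
    simp only [abs_neg, abs_one, one_mul] at h1
    linarith
  have hsum : ∀ (F : (Fin n → ℝ) → ℝ), (∀ v w, F (v + w) ≤ F v + F w) → F 0 = 0 →
      ∀ (s : Finset (Fin n)) (w : Fin n → (Fin n → ℝ)),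
        F (∑ i ∈ s, w i) ≤ ∑ i ∈ s, F (w i) := by
    intro F hFa hF0 s w
    induction s using Finset.induction with
    | empty => simp [hF0]
    | @insert a s ha ih =>
      rw [Finset.sum_insert ha, Finset.sum_insert ha]
      exact (hFa _ _).trans (by linarith)
  have hbound : ∀ (F : (Fin n → ℝ) → ℝ), (∀ v w, F (v + w) ≤ F v + F w) →
      (∀ (c : ℝ) v, F (c • v) = |c| * F v) →
      ∀ u, F u ≤ ∑ i, |u i| * F (Pi.single i 1) := by
    intro F hFa hFs u
    have hF0 : F 0 = 0 := by simpa using hFs 0 0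
    have h1 : u = ∑ i, Pi.single i (u i) := (Finset.univ_sum_single u).symm
    calc F u = F (∑ i, Pi.single i (u i)) := by rw [← h1]
      _ ≤ ∑ i, F (Pi.single i (u i)) := hsum F hFa hF0 _ _
      _ = ∑ i, |u i| * F (Pi.single i 1) := by
          refine Finset.sum_congr rfl fun i _ => ?_
          have : Pi.single i (u i) = u i • (Pi.single i 1 : Fin n → ℝ) := by
            funext j; simp [Pi.single_apply, mul_ite]
          rw [this, hFs]
  set K : ℝ := ∑ i, (f (Pi.single i 1) + g (Pi.single i 1)) with hKdef
  have hK0 : 0 ≤ K := Finset.sum_nonneg fun i _ =>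
    add_nonneg (hnn f hfa hfs _) (hnn g hga hgs _)
  refine le_of_forall_pos_le_add fun ε hε => ?_
  set δ := ε / (K + 1) with hδdef
  have hδ : 0 < δ := div_pos hε (by linarith)
  choose q hq using fun i => exists_rat_near (v i) hδ
  set qv : Fin n → ℝ := fun i => (q i : ℝ) with hqv
  have h1 : f v ≤ f qv + f (v - qv) := by
    have hv : v = qv + (v - qv) := by ring
    calc f v = f (qv + (v - qv)) := by rw [← hv]
      _ ≤ _ := hfa _ _
  have hfv : f (v - qv) ≤ δ * ∑ i, f (Pi.single i 1) := by
    calc f (v - qv) ≤ ∑ i, |(v - qv) i| * f (Pi.single i 1) := hbound f hfa hfs _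
      _ ≤ ∑ i, δ * f (Pi.single i 1) := by
          refine Finset.sum_le_sum fun i _ => ?_
          exact mul_le_mul_of_nonneg_right (le_of_lt (hq i)) (hnn f hfa hfs _)
      _ = δ * ∑ i, f (Pi.single i 1) := by rw [Finset.mul_sum]
  have hgv : g qv ≤ g v + δ * ∑ i, g (Pi.single i 1) := by
    have hv : qv = v + (qv - v) := by ring
    calc g qv = g (v + (qv - v)) := by rw [← hv]
      _ ≤ g v + g (qv - v) := hga _ _
      _ ≤ g v + δ * ∑ i, g (Pi.single i 1) := by
          refine add_le_add le_rfl ?_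
          calc g (qv - v) ≤ ∑ i, |(qv - v) i| * g (Pi.single i 1) := hbound g hga hgs _
            _ ≤ ∑ i, δ * g (Pi.single i 1) := by
                refine Finset.sum_le_sum fun i _ => ?_
                refine mul_le_mul_of_nonneg_right ?_ (hnn g hga hgs _)
                have := hq i
                simp only [Pi.sub_apply]
                rw [abs_sub_comm]
                exact le_of_lt this
            _ = δ * ∑ i, g (Pi.single i 1) := by rw [Finset.mul_sum]
  have hδK : δ * K ≤ ε := by
    have h2 : δ * K ≤ δ * (K + 1) := by nlinarith
    have h3 : δ * (K + 1) = ε := by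
      rw [hδdef]; field_simp
    linarith
  have hKsplit : δ * ∑ i, f (Pi.single i 1) + δ * ∑ i, g (Pi.single i 1) = δ * K := by
    rw [hKdef, Finset.sum_add_distrib]; ring
  calc f v ≤ f qv + f (v - qv) := h1
    _ ≤ g qv + f (v - qv) := by simp only [hqv]; linarith [hfg q]
    _ ≤ g v + δ * ∑ i, g (Pi.single i 1) + δ * ∑ i, f (Pi.single i 1) := by linarith
    _ ≤ g v + ε := by linarith

end AuxLemmas

/-- **The section functor is full.** Every module morphism `Φ : Γ(T₁) → Γ(T₂)` between
the section modules of two measurable Banach bundles over a metric measure space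
`(X,d,m)` — i.e. every map on sections which descends to a.e.-classes, is additive and
`L⁰(m)`-linear up to a.e. equality and satisfies `|Φ(s)| ≤ |s|` `m`-a.e. — is induced by
a morphism of measurable Banach bundles `φ : T₁ → T₂`, in the sense that `φ ∘ s`
represents `Φ(s)` for every section `s`. -/
theorem section_functor_full
    {X : Type*} [MetricSpace X] [CompleteSpace X] [SecondCountableTopology X]
    [MeasurableSpace X] [BorelSpace X]
    (μ : Measure X) [IsLocallyFiniteMeasure μ] (hμ : μ ≠ 0)
    (B₁ B₂ : MBB X μ) (Φ : Sec B₁ → Sec B₂)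
    (hwd : ∀ s t : Sec B₁, Sec.aeeq B₁ s t → Sec.aeeq B₂ (Φ s) (Φ t))
    (hadd : ∀ s t : Sec B₁, Sec.aeeq B₂ (Φ (Sec.add s t)) (Sec.add (Φ s) (Φ t)))
    (hsmul : ∀ (g : X → ℝ) (hg : Measurable g) (s : Sec B₁),
      Sec.aeeq B₂ (Φ (Sec.smul g hg s)) (Sec.smul g hg (Φ s)))
    (hnorm : ∀ s : Sec B₁, ∀ᵐ x ∂μ, ptNorm B₂ (Φ s) x ≤ ptNorm B₁ s x) :
    ∃ φ : MBBHom B₁ B₂, ∀ s : Sec B₁, Represents φ s (Φ s) := by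
  classical
  have hlin : ∀ (k : ℕ) (g : Fin k → X → ℝ) (hg : ∀ i, Measurable (g i))
      (u : Fin k → Sec B₁),
      Sec.aeeq B₂ (Φ (lincomb g hg u)) (lincomb g hg (fun i => Φ (u i))) := by
    intro k
    induction k with
    | zero =>
      intro g hg u
      set z : Sec B₁ := ⟨fun _ _ _ => 0, fun _ => measurable_const⟩ with hz
      have h0 : ∀ n x, (lincomb g hg u).val n x
          = (Sec.smul (fun _ => (0:ℝ)) measurable_const z).val n x := by
        intro n x; funext j; simp [lincomb, Sec.smul, hz]
      refine aeeq_trans (hwd _ _ (aeeq_of_ptwise h0)) ?_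
      refine aeeq_trans (hsmul _ _ _) ?_
      refine aeeq_of_ptwise ?_
      intro n x; funext j; simp [lincomb, Sec.smul]
    | succ k ih =>
      intro g hg u
      have hg' : ∀ i : Fin k, Measurable (g i.castSucc) := fun i => hg _
      have h0 : ∀ n x, (lincomb g hg u).val n x
          = ((lincomb (fun i : Fin k => g i.castSucc) hg' (fun i => u i.castSucc)).add
             (Sec.smul (g (Fin.last k)) (hg _) (u (Fin.last k)))).val n x := by
        intro n x; funext j
        simp only [lincomb, Sec.add, Sec.smul]
        rw [Fin.sum_univ_castSucc]
      refine aeeq_trans (hwd _ _ (aeeq_of_ptwise h0)) ?_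
      refine aeeq_trans (hadd _ _) ?_
      refine aeeq_trans (aeeq_add_congr (ih (fun i => g i.castSucc) hg' (fun i => u i.castSucc))
        (hsmul _ _ _)) ?_
      refine aeeq_of_ptwise ?_
      intro n x; funext j
      simp only [lincomb, Sec.add, Sec.smul]
      rw [Fin.sum_univ_castSucc]
  have hrep : ∀ (s : Sec B₁) (n m : ℕ), ∀ᵐ x ∂μ, x ∈ B₁.E n ∩ B₂.E m →
      (Φ s).val m x = fun j => ∑ i, s.val n x i *
        (Φ (constSec B₁ n (Pi.single i 1))).val m x j := by
    intro s n m
    have hg : ∀ i : Fin n, Measurable (fun x => s.val n x i) :=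
      fun i => (measurable_pi_apply i).comp (s.meas n)
    set u : Fin n → Sec B₁ := fun i => constSec B₁ n (Pi.single i 1) with hudef
    set s' := lincomb (fun i x => s.val n x i) hg u with hs'
    have hA : ∀ k x, x ∈ B₁.E n → x ∈ B₁.E k → s.val k x = s'.val k x := by
      intro k x hxn hxk
      rcases eq_or_ne k n with rfl | hne
      · funext j
        simp [hs', lincomb, hudef, constSec, Pi.single_apply, mul_ite]
      · exact (Set.disjoint_left.mp (B₁.disjE k n hne) hxk hxn).elim
    set g0 : X → ℝ := (B₁.E n).indicator (fun _ => (1:ℝ)) with hg0def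
    have hg0 : Measurable g0 := measurable_const.indicator (B₁.measE n)
    have heq : Sec.aeeq B₁ (Sec.smul g0 hg0 s) (Sec.smul g0 hg0 s') := by
      intro k
      refine Filter.Eventually.of_forall fun x hxk => ?_
      funext j
      simp only [Sec.smul]
      by_cases hxn : x ∈ B₁.E n
      · rw [hA k x hxn hxk]
      · simp [hg0def, Set.indicator_of_notMem hxn]
    have hchain : Sec.aeeq B₂ (Sec.smul g0 hg0 (Φ s)) (Sec.smul g0 hg0 (Φ s')) :=
      aeeq_trans (aeeq_symm (hsmul g0 hg0 s))
        (aeeq_trans (hwd _ _ heq) (hsmul g0 hg0 s'))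
    filter_upwards [hchain m, hlin n (fun i x => s.val n x i) hg u m] with x hx1 hx2 hmem
    obtain ⟨hxn, hxm⟩ := hmem
    have h3 : (Φ s).val m x = (Φ s').val m x := by
      funext j
      have h4 := congrFun (hx1 hxm) j
      simp only [Sec.smul, hg0def, Set.indicator_of_mem hxn, one_mul] at h4
      exact h4
    rw [h3, hx2 hxm]
    rfl
  refine ⟨⟨fun n m x v => fun j => ∑ i, v i * (Φ (constSec B₁ n (Pi.single i 1))).val m x j,
      ?_, ?_, ?_, ?_⟩, ?_⟩
  · intro n m
    refine measurable_pi_lambda _ fun j => ?_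
    refine Finset.measurable_sum _ fun i _ => ?_
    exact ((measurable_pi_apply i).comp measurable_snd).mul
      (((measurable_pi_apply j).comp
        ((Φ (constSec B₁ n (Pi.single i 1))).meas m)).comp measurable_fst)
  · intro n m
    refine Filter.Eventually.of_forall fun x _ v w => ?_
    funext j
    simp [add_mul, Finset.sum_add_distrib]
  · intro n m
    refine Filter.Eventually.of_forall fun x _ c v => ?_
    funext j
    simp [Finset.mul_sum, mul_assoc]
  · intro n m
    have hqall : ∀ᵐ x ∂μ, ∀ q : Fin n → ℚ, x ∈ B₁.E n ∩ B₂.E m →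
        B₂.nrm m x (fun j => ∑ i, (q i : ℝ) *
          (Φ (constSec B₁ n (Pi.single i 1))).val m x j)
        ≤ B₁.nrm n x (fun i => (q i : ℝ)) := by
      rw [ae_all_iff]
      intro q
      filter_upwards [hnorm (constSec B₁ n (fun i => (q i : ℝ))),
        hrep (constSec B₁ n (fun i => (q i : ℝ))) n m] with x h1 h2 hx
      obtain ⟨hx1, hx2⟩ := hx
      rw [ptNorm_eq B₂ hx2, ptNorm_eq B₁ hx1, h2 ⟨hx1, hx2⟩] at h1
      have hc : (constSec B₁ n (fun i => (q i : ℝ))).val n x = fun i => (q i : ℝ) := by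
        funext i; simp [constSec]
      rw [hc] at h1
      exact h1
    filter_upwards [hqall, B₂.nrm_triangle m, B₂.nrm_smul m, B₁.nrm_triangle n, B₁.nrm_smul n]
      with x hq ht2 hs2 ht1 hs1 hx v
    obtain ⟨hx1, hx2⟩ := hx
    refine key
      (fun v => B₂.nrm m x (fun j => ∑ i, v i *
        (Φ (constSec B₁ n (Pi.single i 1))).val m x j))
      (B₁.nrm n x) ?_ ?_ (ht1 hx1) (hs1 hx1) (fun q => hq q ⟨hx1, hx2⟩) v
    · intro v w
      have hL : (fun j => ∑ i, (v + w) i *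
            (Φ (constSec B₁ n (Pi.single i 1))).val m x j)
          = (fun j => ∑ i, v i * (Φ (constSec B₁ n (Pi.single i 1))).val m x j)
            + (fun j => ∑ i, w i * (Φ (constSec B₁ n (Pi.single i 1))).val m x j) := by
        funext j; simp [add_mul, Finset.sum_add_distrib]
      simp only [hL]
      exact ht2 hx2 _ _
    · intro c v
      have hL : (fun j => ∑ i, (c • v) i *
            (Φ (constSec B₁ n (Pi.single i 1))).val m x j)
          = c • (fun j => ∑ i, v i * (Φ (constSec B₁ n (Pi.single i 1))).val m x j) := by
        funext j; simp [Finset.mul_sum, mul_assoc]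
      simp only [hL]
      exact hs2 hx2 c _
  · intro s n m
    filter_upwards [hrep s n m] with x hx hmem
    exact hx hmem

end L0SerreSwan
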